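/- Let 3/4 < λ < 1. Then for all r ∈ (0, π/2), one has sin((π/2 − r)·√(1−λ)) · tan(r) < √(1−λ). -/
import Mathlib


open Real

theorem stmt0 (lam r : ℝ) (h1 : 3/4 < lam) (h2 : lam < 1)
    (hr1 : 0 < r) (hr2 : r < π/2) :
    Real.sin ((π/2 - r) * Real.sqrt (1 - lam)) * Real.tan r < Real.sqrt (1 - lam) := by
  set s := Real.sqrt (1 - lam) with hs
  have hs0 : 0 < s := Real.sqrt_pos.mpr (by linarith)
  set t := π/2 - r with ht
  have ht0 : 0 < t := by simp only [ht]; linarith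
  have ht2 : t < π/2 := by simp only [ht]; linarith
  clear_value s t
  have hsint : 0 < Real.sin t :=
    Real.sin_pos_of_pos_of_lt_pi ht0 (by nlinarith [Real.pi_pos])
  have hcost : 0 < Real.cos t :=
    Real.cos_pos_of_mem_Ioo ⟨by linarith, ht2⟩
  have htan : Real.tan r = Real.cos t / Real.sin t := by
    rw [Real.tan_eq_sin_div_cos, ht, Real.cos_pi_div_two_sub, Real.sin_pi_div_two_sub]
  have htanpos : 0 < Real.tan r := by rw [htan]; positivity
  have h1' : Real.sin (t * s) < t * s := Real.sin_lt (by positivity)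
  have h2' : t * Real.tan r < 1 := by
    have hlt := Real.lt_tan ht0 ht2
    rw [Real.tan_eq_sin_div_cos, lt_div_iff₀ hcost] at hlt
    rw [htan, ← mul_div_assoc, div_lt_one hsint]
    linarith
  calc Real.sin (t * s) * Real.tan r < (t * s) * Real.tan r :=
        mul_lt_mul_of_pos_right h1' htanpos
    _ = s * (t * Real.tan r) := by ring
    _ < s * 1 := mul_lt_mul_of_pos_left h2' hs0
    _ = s := mul_one s
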